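/- For the lasso graph with a pendant edge of length ℓ₁ (with Dirichlet condition at its free endpoint) attached to a loop of length ℓ₂, the torsional rigidity equals (ℓ₁³ + ℓ₂³)/12 + (ℓ₁ + 2ℓ₂)²ℓ₁/4, and the maximum of the torsion function is ℓ₁²/2 + ℓ₁ℓ₂ + ℓ₂²/8. -/

import Mathlib

open MeasureTheory intervalIntegral

private lemma deriv_lin (L : ℝ) (f f' : ℝ → ℝ)
    (hd : ∀ x ∈ Set.Icc (0:ℝ) L, HasDerivAt f (f' x) x)
    (hd' : ∀ x ∈ Set.Icc (0:ℝ) L, HasDerivAt f' (-1) x) :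
    ∀ x ∈ Set.Icc (0:ℝ) L, f' x = f' 0 - x := by
  intro x hx
  have key : ∀ y ∈ Set.Icc (0:ℝ) L, (fun t => f' t + t) y = (fun t => f' t + t) 0 := by
    apply constant_of_has_deriv_right_zero
    · intro y hy
      exact ((hd' y hy).add (hasDerivAt_id y)).continuousAt.continuousWithinAt
    · intro y hy
      have := ((hd' y (Set.mem_Icc.2 ⟨hy.1, hy.2.le⟩)).add (hasDerivAt_id y))
      have h0 : (-1 : ℝ) + 1 = 0 := by ring
      rw [h0] at this
      exact this.hasDerivWithinAt
  have := key x hx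
  simp only at this
  linarith

private lemma fun_quad (L : ℝ) (f f' : ℝ → ℝ)
    (hd : ∀ x ∈ Set.Icc (0:ℝ) L, HasDerivAt f (f' x) x)
    (hd' : ∀ x ∈ Set.Icc (0:ℝ) L, HasDerivAt f' (-1) x) :
    ∀ x ∈ Set.Icc (0:ℝ) L, f x = f 0 + f' 0 * x - x ^ 2 / 2 := by
  have hlin := deriv_lin L f f' hd hd'
  intro x hx
  have key : ∀ y ∈ Set.Icc (0:ℝ) L,
      (fun t => f t - f' 0 * t + t ^ 2 / 2) y = (fun t => f t - f' 0 * t + t ^ 2 / 2) 0 := by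
    apply constant_of_has_deriv_right_zero
    · intro y hy
      have : HasDerivAt (fun t => f t - f' 0 * t + t ^ 2 / 2)
          (f' y - f' 0 + y) y := by
        have h1 := hd y hy
        have h2 : HasDerivAt (fun t : ℝ => f' 0 * t) (f' 0) y := by
          simpa using (hasDerivAt_id y).const_mul (f' 0)
        have h3 : HasDerivAt (fun t : ℝ => t ^ 2 / 2) y y := by
          have := (hasDerivAt_pow 2 y).div_const 2
          simpa [mul_comm] using this
        exact (h1.sub h2).add h3
      exact this.continuousAt.continuousWithinAt
    · intro y hy
      have hy' : y ∈ Set.Icc (0:ℝ) L := ⟨hy.1, hy.2.le⟩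
      have h1 := hd y hy'
      have h2 : HasDerivAt (fun t : ℝ => f' 0 * t) (f' 0) y := by
        simpa using (hasDerivAt_id y).const_mul (f' 0)
      have h3 : HasDerivAt (fun t : ℝ => t ^ 2 / 2) y y := by
        have := (hasDerivAt_pow 2 y).div_const 2
        simpa [mul_comm] using this
      have h4 : HasDerivAt (fun t => f t - f' 0 * t + t ^ 2 / 2)
          (f' y - f' 0 + y) y := by exact (h1.sub h2).add h3
      have h5 : f' y - f' 0 + y = 0 := by
        have := hlin y hy'; linarith
      rw [h5] at h4
      exact h4.hasDerivWithinAt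
  have := key x hx
  simp only at this
  linarith

private lemma integral_quad (L c b : ℝ) (hL : 0 ≤ L) (f : ℝ → ℝ)
    (hf : ∀ x ∈ Set.Icc (0:ℝ) L, f x = c + b * x - x ^ 2 / 2) :
    (∫ x in (0:ℝ)..L, f x) = c * L + b * L ^ 2 / 2 - L ^ 3 / 6 := by
  have hcong : (∫ x in (0:ℝ)..L, f x) = ∫ x in (0:ℝ)..L, (c + b * x - x ^ 2 / 2) := by
    apply intervalIntegral.integral_congr
    intro x hx
    rw [Set.uIcc_of_le hL] at hx
    exact hf x hx
  rw [hcong]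
  have : (∫ x in (0:ℝ)..L, (c + b * x - x ^ 2 / 2)) =
      (c * L + b * L ^ 2 / 2 - L ^ 3 / 6) - (c * 0 + b * 0 ^ 2 / 2 - 0 ^ 3 / 6) := by
    apply intervalIntegral.integral_eq_sub_of_hasDerivAt
    · intro x _
      have h1 : HasDerivAt (fun t : ℝ => c * t + b * t ^ 2 / 2 - t ^ 3 / 6)
          (c + b * x - x ^ 2 / 2) x := by
        have ha : HasDerivAt (fun t : ℝ => c * t) c x := by
          simpa using (hasDerivAt_id x).const_mul c
        have hb : HasDerivAt (fun t : ℝ => b * t ^ 2 / 2) (b * x) x := by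
          have h := ((hasDerivAt_pow 2 x).const_mul b).div_const 2
          convert h using 1
          exacts [rfl, rfl, by push_cast; ring]
        have hc3 : HasDerivAt (fun t : ℝ => t ^ 3 / 6) (x ^ 2 / 2) x := by
          have := (hasDerivAt_pow 3 x).div_const 6
          have e : (↑3 : ℝ) * x ^ (3-1) / 6 = x ^ 2 / 2 := by push_cast; ring
          simpa [e] using this
        exact (ha.add hb).sub hc3
      exact h1
    · apply Continuous.intervalIntegrable
      continuity
  rw [this]; ring

/-- For the lasso graph (pendant edge of length `ℓ₁` with Dirichlet condition at its free
endpoint, attached to a loop of length `ℓ₂`), the torsional rigidity equals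
`(ℓ₁³+ℓ₂³)/12 + (ℓ₁+2ℓ₂)²ℓ₁/4` and the maximum of the torsion function is
`ℓ₁²/2 + ℓ₁ℓ₂ + ℓ₂²/8`. -/
theorem stmt8 (ℓ₁ ℓ₂ : ℝ) (h1 : 0 < ℓ₁) (h2 : 0 < ℓ₂)
    (v₁ v₁' v₂ v₂' : ℝ → ℝ)
    (hder1 : ∀ x ∈ Set.Icc (0:ℝ) ℓ₁, HasDerivAt v₁ (v₁' x) x)
    (hder1' : ∀ x ∈ Set.Icc (0:ℝ) ℓ₁, HasDerivAt v₁' (-1) x)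
    (hder2 : ∀ x ∈ Set.Icc (0:ℝ) ℓ₂, HasDerivAt v₂ (v₂' x) x)
    (hder2' : ∀ x ∈ Set.Icc (0:ℝ) ℓ₂, HasDerivAt v₂' (-1) x)
    (hD : v₁ 0 = 0)
    (hc1 : v₁ ℓ₁ = v₂ 0) (hc2 : v₂ 0 = v₂ ℓ₂)
    (hKir : v₂' 0 - v₂' ℓ₂ - v₁' ℓ₁ = 0) :
    ((∫ x in (0:ℝ)..ℓ₁, v₁ x) + ∫ x in (0:ℝ)..ℓ₂, v₂ x) =
        (ℓ₁ ^ 3 + ℓ₂ ^ 3) / 12 + (ℓ₁ + 2 * ℓ₂) ^ 2 * ℓ₁ / 4 ∧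
      IsGreatest (v₁ '' Set.Icc (0:ℝ) ℓ₁ ∪ v₂ '' Set.Icc (0:ℝ) ℓ₂)
        (ℓ₁ ^ 2 / 2 + ℓ₁ * ℓ₂ + ℓ₂ ^ 2 / 8) := by
  have hmem1 : (ℓ₁ : ℝ) ∈ Set.Icc (0:ℝ) ℓ₁ := ⟨h1.le, le_refl _⟩
  have hmem2 : (ℓ₂ : ℝ) ∈ Set.Icc (0:ℝ) ℓ₂ := ⟨h2.le, le_refl _⟩
  have hq1 := fun_quad ℓ₁ v₁ v₁' hder1 hder1'
  have hq2 := fun_quad ℓ₂ v₂ v₂' hder2 hder2'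
  have hl1 := deriv_lin ℓ₁ v₁ v₁' hder1 hder1'
  have hl2 := deriv_lin ℓ₂ v₂ v₂' hder2 hder2'
  set a := v₁' 0 with ha
  set b := v₂' 0 with hb
  -- determine the constants
  have hb_eq : b = ℓ₂ / 2 := by
    have e1 := hq2 ℓ₂ hmem2
    have h : v₂ 0 = v₂ 0 + b * ℓ₂ - ℓ₂ ^ 2 / 2 := hc2.trans e1
    have hb2 : b * ℓ₂ = (ℓ₂ / 2) * ℓ₂ := by nlinarith
    exact mul_right_cancel₀ h2.ne' hb2
  have ha_eq : a = ℓ₁ + ℓ₂ := by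
    have e1 := hl1 ℓ₁ hmem1
    have e2 := hl2 ℓ₂ hmem2
    have : b - (b - ℓ₂) - (a - ℓ₁) = 0 := by rw [← e1, ← e2]; exact hKir
    linarith
  have hv20 : v₂ 0 = ℓ₁ ^ 2 / 2 + ℓ₁ * ℓ₂ := by
    have e1 := hq1 ℓ₁ hmem1
    rw [hD, ha_eq] at e1
    rw [← hc1, e1]; ring
  -- explicit formulas
  have hf1 : ∀ x ∈ Set.Icc (0:ℝ) ℓ₁, v₁ x = 0 + (ℓ₁ + ℓ₂) * x - x ^ 2 / 2 := by
    intro x hx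
    have := hq1 x hx
    rw [hD, ha_eq] at this
    linarith
  have hf2 : ∀ x ∈ Set.Icc (0:ℝ) ℓ₂,
      v₂ x = (ℓ₁ ^ 2 / 2 + ℓ₁ * ℓ₂) + (ℓ₂ / 2) * x - x ^ 2 / 2 := by
    intro x hx
    have := hq2 x hx
    rw [hv20, hb_eq] at this
    linarith
  constructor
  · rw [integral_quad ℓ₁ 0 (ℓ₁ + ℓ₂) h1.le v₁ hf1,
      integral_quad ℓ₂ (ℓ₁ ^ 2 / 2 + ℓ₁ * ℓ₂) (ℓ₂ / 2) h2.le v₂ hf2]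
    ring
  · constructor
    · right
      refine ⟨ℓ₂ / 2, ⟨by linarith, by linarith⟩, ?_⟩
      rw [hf2 (ℓ₂ / 2) ⟨by linarith, by linarith⟩]
      ring
    · rintro y (⟨x, hx, rfl⟩ | ⟨x, hx, rfl⟩)
      · obtain ⟨hx0, hx1⟩ := hx
        rw [hf1 x ⟨hx0, hx1⟩]
        nlinarith [mul_nonneg (sub_nonneg.2 hx1) (by linarith : (0:ℝ) ≤ ℓ₁ + 2 * ℓ₂ - x), sq_nonneg ℓ₂]
      · rw [hf2 x hx]
        nlinarith [sq_nonneg (x - ℓ₂ / 2)]
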